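/- For every positive integer n, ∑_{k=1}^{n} (-1)^k * C(n,k) * C(n+k,k) * (∑_{i=1}^{k} 1/(n+i)) = (-1)^n * H_n, where H_n is the n-th harmonic number. -/

import Mathlib

open Polynomial Finset

-- Step 0: generic tools

private lemma my_sum_Icc_eq_range {M : Type*} [AddCommMonoid M] (f : ℕ → M) (k : ℕ) :
    ∑ i ∈ Finset.Icc 1 k, f i = ∑ i ∈ Finset.range k, f (i + 1) := by
  induction k with
  | zero => simp
  | succ k ih =>
      rw [Finset.sum_range_succ, ← ih, ← Finset.sum_Icc_succ_top (by omega : 1 ≤ k + 1)]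

private lemma my_prod_Icc_eq_range {M : Type*} [CommMonoid M] (f : ℕ → M) (k : ℕ) :
    ∏ i ∈ Finset.Icc 1 k, f i = ∏ i ∈ Finset.range k, f (i + 1) := by
  induction k with
  | zero => simp
  | succ k ih =>
      rw [Finset.prod_range_succ, ← ih, ← Finset.prod_Icc_succ_top (by omega : 1 ≤ k + 1)]

private lemma my_derivative_prod {ι : Type*} [DecidableEq ι] (s : Finset ι) (f : ι → ℚ[X]) :
    Polynomial.derivative (∏ i ∈ s, f i)
      = ∑ i ∈ s, (∏ j ∈ s.erase i, f j) * Polynomial.derivative (f i) := by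
  classical
  refine Finset.induction_on s (by simp) ?_
  intro a s ha ih
  have key : ∀ b ∈ s, (∏ j ∈ (insert a s).erase b, f j) * Polynomial.derivative (f b)
      = f a * ((∏ j ∈ s.erase b, f j) * Polynomial.derivative (f b)) := by
    intro b hb
    rw [Finset.erase_insert_of_ne (by rintro rfl; exact ha hb),
      Finset.prod_insert (fun h => ha (Finset.mem_of_mem_erase h))]
    ring
  rw [Finset.prod_insert ha, Polynomial.derivative_mul, Finset.sum_insert ha,
    Finset.erase_insert ha, ih, Finset.mul_sum, Finset.sum_congr rfl key]
  ring

private lemma choose_flip (j k : ℕ) : (j + k).choose j = (j + k).choose k := by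
  rw [← Nat.choose_symm (Nat.le_add_left k j)]
  congr 1
  omega

-- Step 1: integer identity  ∑ (-1)^k C(n,k) C(j+k,k) = (-1)^n C(j,n)

private lemma fwd_helper (j : ℕ) : ∀ m, m ≤ j →
    (fwdDiff 1)^[m] (fun x : ℕ => ((x + j).choose j : ℤ)) =
      fun x : ℕ => ((x + j).choose (j - m) : ℤ) := by
  intro m
  induction m with
  | zero => simp
  | succ m ih =>
      intro hm
      rw [Function.iterate_succ_apply', ih (by omega)]
      funext x
      have h1 : j - m = (j - (m + 1)) + 1 := by omega
      simp only [fwdDiff]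
      rw [h1]
      have : x + 1 + j = (x + j) + 1 := by ring
      rw [this, Nat.choose_succ_succ' (x + j) (j - (m+1))]
      push_cast
      ring

private lemma int_identity (n j : ℕ) :
    ∑ k ∈ Finset.range (n + 1), (-1 : ℤ) ^ k * (n.choose k) * ((j + k).choose k)
      = (-1 : ℤ) ^ n * (j.choose n) := by
  have key : (fwdDiff 1)^[n] (fun x : ℕ => ((x + j).choose j : ℤ)) 0 = (j.choose n : ℤ) := by
    by_cases h : n ≤ j
    · rw [fwd_helper j n h]
      simp [Nat.choose_symm h]
    · push_neg at h
      obtain ⟨m, rfl⟩ : ∃ m, n = j + (m + 1) := ⟨n - j - 1, by omega⟩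
      rw [add_comm j, Function.iterate_add_apply]
      have hj : (fwdDiff 1)^[j] (fun x : ℕ => ((x + j).choose j : ℤ)) = fun _ => (1 : ℤ) := by
        rw [fwd_helper j j le_rfl]; simp
      rw [hj]
      have hz : ∀ l x, (fwdDiff (1:ℕ))^[l+1] (fun _ : ℕ => (1 : ℤ)) x = 0 := by
        intro l
        induction l with
        | zero => intro x; simp [fwdDiff]
        | succ l ih =>
            intro x
            rw [Function.iterate_succ_apply]
            have : fwdDiff (1:ℕ) (fun _ : ℕ => (1 : ℤ)) = fun _ => (0:ℤ) := by
              funext y; simp [fwdDiff]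
            rw [this]
            have : ∀ l x, (fwdDiff (1:ℕ))^[l] (fun _ : ℕ => (0 : ℤ)) x = 0 := by
              intro l
              induction l with
              | zero => simp
              | succ l ih2 =>
                  intro x
                  rw [Function.iterate_succ_apply]
                  have : fwdDiff (1:ℕ) (fun _ : ℕ => (0 : ℤ)) = fun _ => (0:ℤ) := by
                    funext y; simp [fwdDiff]
                  rw [this]; exact ih2 x
            exact this l x
      rw [Nat.choose_eq_zero_of_lt (by omega), Nat.cast_zero]
      exact hz m 0
  have expand := fwdDiff_iter_eq_sum_shift (1 : ℕ)
    (fun x : ℕ => ((x + j).choose j : ℤ)) n 0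
  rw [key] at expand
  have : ∑ k ∈ Finset.range (n + 1), (-1 : ℤ) ^ k * (n.choose k) * ((j + k).choose k)
      = (-1 : ℤ)^n * ∑ k ∈ Finset.range (n + 1),
          ((-1 : ℤ) ^ (n - k) * (n.choose k)) • (fun x : ℕ => ((x + j).choose j : ℤ)) (0 + k • 1) := by
    rw [Finset.mul_sum]
    apply Finset.sum_congr rfl
    intro k hk
    have hk' : k ≤ n := by simpa using Nat.lt_succ_iff.mp (Finset.mem_range.mp hk)
    simp only [smul_eq_mul, zero_add, smul_eq_mul, mul_one]
    have hsign : (-1 : ℤ)^n * (-1:ℤ)^(n-k) = (-1:ℤ)^k := by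
      rw [← pow_add]
      have : n + (n - k) = 2 * (n - k) + k := by omega
      rw [this, pow_add, pow_mul]
      simp
    have hc : ((k + j).choose j : ℤ) = ((j + k).choose k : ℤ) := by
      rw [add_comm k j, choose_flip]
    rw [← mul_assoc, ← mul_assoc, hsign, hc]
  rw [this, ← expand]

-- Step 2: polynomial identity

private noncomputable def Lp (n : ℕ) : ℚ[X] :=
  ∑ k ∈ Finset.range (n + 1),
    Polynomial.C ((-1 : ℚ) ^ k * (n.choose k) / (k.factorial)) *
      ∏ i ∈ Finset.Icc 1 k, (Polynomial.X + Polynomial.C (i : ℚ))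

private noncomputable def Rp (n : ℕ) : ℚ[X] :=
  Polynomial.C ((-1 : ℚ) ^ n / (n.factorial)) *
    ∏ j ∈ Finset.range n, (Polynomial.X - Polynomial.C (j : ℚ))

private lemma prod_Icc_cast (j k : ℕ) :
    ∏ i ∈ Finset.Icc 1 k, ((j : ℚ) + i) = ((j + k).choose k : ℚ) * k.factorial := by
  induction k with
  | zero => simp
  | succ k ih =>
      rw [Finset.prod_Icc_succ_top (by omega : 1 ≤ k + 1), ih]
      have h := Nat.add_one_mul_choose_eq (j + k) k
      have h' : ((j + k + 1) * ((j + k).choose k) : ℚ) = ((j + k + 1).choose (k + 1)) * (k + 1) := by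
        exact_mod_cast congrArg (Nat.cast : ℕ → ℚ) h
      have e : j + (k + 1) = (j + k) + 1 := by omega
      rw [e, Nat.factorial_succ]
      push_cast
      push_cast at h'
      linear_combination (k.factorial : ℚ) * h' 

private lemma prod_range_cast {n j : ℕ} (h : n ≤ j) :
    ∏ i ∈ Finset.range n, ((j : ℚ) - i) = (j.choose n : ℚ) * n.factorial := by
  induction n with
  | zero => simp
  | succ n ih =>
      rw [Finset.prod_range_succ, ih (by omega)]
      have h2 := Nat.choose_succ_right_eq j n
      have h2' : ((j.choose (n+1)) * (n + 1) : ℚ) = (j.choose n) * ((j : ℚ) - n) := by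
        have hc : ((j - n : ℕ) : ℚ) = (j : ℚ) - n := by
          rw [Nat.cast_sub (by omega)]
        rw [← hc]
        exact_mod_cast congrArg (Nat.cast : ℕ → ℚ) h2
      rw [Nat.factorial_succ]
      push_cast
      push_cast at h2'
      linear_combination (-(n.factorial : ℚ)) * h2' 

private lemma poly_identity (n : ℕ) : Lp n = Rp n := by
  apply Polynomial.eq_of_infinite_eval_eq
  apply Set.Infinite.mono (s := (fun j : ℕ => ((j + n : ℕ) : ℚ)) '' Set.univ)
  · rintro x ⟨j, -, rfl⟩
    simp only [Set.mem_setOf_eq, Lp, Rp]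
    rw [Polynomial.eval_finset_sum]
    have hL : ∀ k ∈ Finset.range (n+1),
        Polynomial.eval ((j + n : ℕ) : ℚ)
          (Polynomial.C ((-1 : ℚ) ^ k * (n.choose k) / (k.factorial)) *
            ∏ i ∈ Finset.Icc 1 k, (Polynomial.X + Polynomial.C (i : ℚ)))
        = (-1 : ℚ) ^ k * (n.choose k) * (((j + n) + k).choose k : ℚ) := by
      intro k hk
      rw [Polynomial.eval_mul, Polynomial.eval_C, Polynomial.eval_prod]
      simp only [Polynomial.eval_add, Polynomial.eval_X, Polynomial.eval_C]
      rw [prod_Icc_cast (j + n) k]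
      have : (k.factorial : ℚ) ≠ 0 := by exact_mod_cast k.factorial_ne_zero
      field_simp
    rw [Finset.sum_congr rfl hL]
    have hint : ∑ k ∈ Finset.range (n + 1),
        (-1 : ℚ) ^ k * (n.choose k) * (((j + n) + k).choose k : ℚ)
        = (-1 : ℚ) ^ n * ((j + n).choose n : ℚ) := by
      have := int_identity n (j + n)
      exact_mod_cast congrArg (Int.cast : ℤ → ℚ) this
    rw [hint, Polynomial.eval_mul, Polynomial.eval_C, Polynomial.eval_prod]
    simp only [Polynomial.eval_sub, Polynomial.eval_X, Polynomial.eval_C]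
    rw [prod_range_cast (by omega : n ≤ j + n)]
    have : (n.factorial : ℚ) ≠ 0 := by exact_mod_cast n.factorial_ne_zero
    field_simp
  · apply Set.infinite_of_injective_forall_mem
      (f := fun j : ℕ => ((j + n : ℕ) : ℚ))
    · intro a b hab
      have h2 : a + n = b + n := Nat.cast_inj.mp hab
      omega
    · intro j
      exact ⟨j, Set.mem_univ j, rfl⟩

-- Step 3: evaluate derivatives at n

theorem alternating_sum_binom_partial_harmonic (n : ℕ) (hn : 0 < n) :
    ∑ k ∈ Finset.Icc 1 n,
      (-1 : ℚ) ^ k * (Nat.choose n k) * (Nat.choose (n + k) k) *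
        (∑ i ∈ Finset.Icc 1 k, (1 : ℚ) / (n + i))
    = (-1 : ℚ) ^ n * (∑ i ∈ Finset.Icc 1 n, (1 : ℚ) / i) := by
  have hderiv := congrArg (fun p => Polynomial.eval (n : ℚ) (Polynomial.derivative p))
    (poly_identity n)
  simp only [Lp, Rp] at hderiv
  -- evaluate LHS derivative
  have hL : Polynomial.eval (n : ℚ) (Polynomial.derivative
      (∑ k ∈ Finset.range (n + 1),
        Polynomial.C ((-1 : ℚ) ^ k * (n.choose k) / (k.factorial)) *
          ∏ i ∈ Finset.Icc 1 k, (Polynomial.X + Polynomial.C (i : ℚ))))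
      = ∑ k ∈ Finset.Icc 1 n,
        (-1 : ℚ) ^ k * (n.choose k) * ((n + k).choose k : ℚ) *
          (∑ i ∈ Finset.Icc 1 k, (1 : ℚ) / (n + i)) := by
    rw [map_sum, Polynomial.eval_finset_sum]
    have hterm : ∀ k ∈ Finset.range (n + 1),
        Polynomial.eval (n : ℚ) (Polynomial.derivative
          (Polynomial.C ((-1 : ℚ) ^ k * (n.choose k) / (k.factorial)) *
            ∏ i ∈ Finset.Icc 1 k, (Polynomial.X + Polynomial.C (i : ℚ))))
        = (-1 : ℚ) ^ k * (n.choose k) * ((n + k).choose k : ℚ) *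
            (∑ i ∈ Finset.Icc 1 k, (1 : ℚ) / (n + i)) := by
      intro k hk
      rw [Polynomial.derivative_C_mul, Polynomial.eval_mul, Polynomial.eval_C]
      rw [my_derivative_prod, Polynomial.eval_finset_sum]
      have hfac : ∀ m ∈ Finset.Icc 1 k,
          Polynomial.eval (n : ℚ)
            ((∏ j ∈ (Finset.Icc 1 k).erase m, (Polynomial.X + Polynomial.C (j : ℚ))) *
              Polynomial.derivative (Polynomial.X + Polynomial.C (m : ℚ)))
          = (((n + k).choose k : ℚ) * k.factorial) * (1 / ((n : ℚ) + m)) := by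
        intro m hm
        rw [Polynomial.derivative_X_add_C, Polynomial.eval_mul, Polynomial.eval_one, mul_one,
          Polynomial.eval_prod]
        simp only [Polynomial.eval_add, Polynomial.eval_X, Polynomial.eval_C]
        have hmem := hm
        rw [Finset.mem_Icc] at hmem
        have hne : ((n : ℚ) + m) ≠ 0 := by
          have : (0:ℚ) < (n:ℚ) + m := by
            have : (0:ℚ) < (n:ℚ) := by exact_mod_cast hn
            have hm0 : (0:ℚ) ≤ (m:ℚ) := by positivity
            linarith
          linarith
        have hprod : (∏ j ∈ (Finset.Icc 1 k).erase m, ((n : ℚ) + j)) * ((n:ℚ) + m)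
            = ∏ j ∈ Finset.Icc 1 k, ((n : ℚ) + j) :=
          Finset.prod_erase_mul _ _ hm
        rw [prod_Icc_cast n k] at hprod
        field_simp
        linarith [hprod]
      rw [Finset.sum_congr rfl hfac, ← Finset.mul_sum]
      have : (k.factorial : ℚ) ≠ 0 := by exact_mod_cast k.factorial_ne_zero
      field_simp
    rw [Finset.sum_congr rfl hterm]
    rw [my_sum_Icc_eq_range (fun k => (-1 : ℚ) ^ k * (n.choose k) * ((n + k).choose k : ℚ) *
          (∑ i ∈ Finset.Icc 1 k, (1 : ℚ) / (n + i))) n]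
    rw [Finset.sum_range_succ']
    simp
  -- evaluate RHS derivative
  have hR : Polynomial.eval (n : ℚ) (Polynomial.derivative
      (Polynomial.C ((-1 : ℚ) ^ n / (n.factorial)) *
        ∏ j ∈ Finset.range n, (Polynomial.X - Polynomial.C (j : ℚ))))
      = (-1 : ℚ) ^ n * (∑ i ∈ Finset.Icc 1 n, (1 : ℚ) / i) := by
    rw [Polynomial.derivative_C_mul, Polynomial.eval_mul, Polynomial.eval_C]
    rw [my_derivative_prod, Polynomial.eval_finset_sum]
    have hfac : ∀ m ∈ Finset.range n,
        Polynomial.eval (n : ℚ)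
          ((∏ j ∈ (Finset.range n).erase m, (Polynomial.X - Polynomial.C (j : ℚ))) *
            Polynomial.derivative (Polynomial.X - Polynomial.C (m : ℚ)))
        = (n.factorial : ℚ) * (1 / ((n : ℚ) - m)) := by
      intro m hm
      rw [Polynomial.derivative_X_sub_C, Polynomial.eval_mul, Polynomial.eval_one, mul_one,
        Polynomial.eval_prod]
      simp only [Polynomial.eval_sub, Polynomial.eval_X, Polynomial.eval_C]
      have hmn : m < n := Finset.mem_range.mp hm
      have hne : ((n : ℚ) - m) ≠ 0 := by
        have : (m : ℚ) < n := by exact_mod_cast hmn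
        linarith
      have hprod : (∏ j ∈ (Finset.range n).erase m, ((n : ℚ) - j)) * ((n:ℚ) - m)
          = ∏ j ∈ Finset.range n, ((n : ℚ) - j) :=
        Finset.prod_erase_mul _ _ hm
      rw [prod_range_cast (le_refl n), Nat.choose_self] at hprod
      push_cast at hprod
      field_simp
      linarith [hprod]
    rw [Finset.sum_congr rfl hfac, ← Finset.mul_sum]
    have hfne : (n.factorial : ℚ) ≠ 0 := by exact_mod_cast n.factorial_ne_zero
    have hsum : ∑ m ∈ Finset.range n, (1:ℚ) / ((n : ℚ) - m)
        = ∑ i ∈ Finset.Icc 1 n, (1 : ℚ) / i := by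
      rw [my_sum_Icc_eq_range (fun i => (1:ℚ)/i) n]
      conv_rhs => rw [← Finset.sum_range_reflect]
      apply Finset.sum_congr rfl
      intro m hm
      have hmn : m < n := Finset.mem_range.mp hm
      have hcast : ((n - 1 - m + 1 : ℕ) : ℚ) = (n : ℚ) - m := by
        have he : n - 1 - m + 1 = n - m := by omega
        rw [he, Nat.cast_sub (by omega)]
      rw [hcast]
    rw [hsum]
    field_simp
  rw [hL, hR] at hderiv
  exact hderiv
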